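/- Let Δ be a complete fan in N ⊗ ℝ with full-dimensional cones σ₁,…,σ_r. A tuple of polynomials (f₁,…,f_r) ∈ (Sym M)^r arises as the tuple of restrictions of a piecewise polynomial function on Δ if and only if for every codimension-one cone τ ∈ Δ that is a common face τ = σ_i ∩ σ_j of two full-dimensional cones, the restrictions satisfy f_i|_τ = f_j|_τ. -/

import Mathlib

open MvPolynomial

noncomputable def pev {n : ℕ} (p : MvPolynomial (Fin n) ℤ) (x : Fin n → ℝ) : ℝ :=
  MvPolynomial.aeval x p

def coneOf {n : ℕ} (G : Finset (Fin n → ℤ)) : Set (Fin n → ℝ) :=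
  {x | ∃ c : (Fin n → ℤ) → ℝ, (∀ g, 0 ≤ c g) ∧ x = ∑ g ∈ G, c g • (fun i => (g i : ℝ))}

def IsRatCone {n : ℕ} (σ : Set (Fin n → ℝ)) : Prop := ∃ G, σ = coneOf G

def pairing {n : ℕ} (u : Fin n → ℤ) (x : Fin n → ℝ) : ℝ := ∑ i, (u i : ℝ) * x i

def IsFaceOf {n : ℕ} (τ σ : Set (Fin n → ℝ)) : Prop :=
  ∃ u : Fin n → ℤ, (∀ x ∈ σ, 0 ≤ pairing u x) ∧ τ = {x ∈ σ | pairing u x = 0}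

structure Fan (n : ℕ) where
  cones : Set (Set (Fin n → ℝ))
  finite : cones.Finite
  rat : ∀ σ ∈ cones, IsRatCone σ
  face_mem : ∀ σ ∈ cones, ∀ τ, IsFaceOf τ σ → τ ∈ cones
  inter_face : ∀ σ ∈ cones, ∀ σ' ∈ cones, IsFaceOf (σ ∩ σ') σ

def Fan.support {n : ℕ} (Δ : Fan n) : Set (Fin n → ℝ) := ⋃ σ ∈ Δ.cones, σ

theorem Fan.subset_support {n : ℕ} (Δ : Fan n) {σ} (hσ : σ ∈ Δ.cones) : σ ⊆ Δ.support :=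
  fun _ hx => Set.mem_biUnion hσ hx

def PPset {n : ℕ} (Δ : Fan n) : Set (↥Δ.support → ℝ) :=
  {f | ∀ σ ∈ Δ.cones, ∃ p : MvPolynomial (Fin n) ℤ,
      ∀ x : ↥Δ.support, (x : Fin n → ℝ) ∈ σ → f x = pev p x}

/-! ### Chunk 1: cone basics -/

section ConeBasics

variable {n : ℕ}

def ιv (g : Fin n → ℤ) : Fin n → ℝ := fun i => (g i : ℝ)

lemma coneOf_eq (G : Finset (Fin n → ℤ)) :
    coneOf G = {x | ∃ c : (Fin n → ℤ) → ℝ, (∀ g, 0 ≤ c g) ∧ x = ∑ g ∈ G, c g • ιv g} := rfl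

lemma zero_mem_coneOf (G : Finset (Fin n → ℤ)) : (0 : Fin n → ℝ) ∈ coneOf G :=
  ⟨0, fun _ => le_rfl, by simp⟩

lemma coneOf_nonempty (G : Finset (Fin n → ℤ)) : (coneOf G).Nonempty := ⟨0, zero_mem_coneOf G⟩

lemma add_mem_coneOf {G : Finset (Fin n → ℤ)} {x y : Fin n → ℝ}
    (hx : x ∈ coneOf G) (hy : y ∈ coneOf G) : x + y ∈ coneOf G := by
  obtain ⟨c, hc, rfl⟩ := hx
  obtain ⟨d, hd, rfl⟩ := hy
  exact ⟨c + d, fun g => add_nonneg (hc g) (hd g), by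
    simp [add_smul, Finset.sum_add_distrib]⟩

lemma smul_mem_coneOf {G : Finset (Fin n → ℤ)} {x : Fin n → ℝ} {t : ℝ}
    (ht : 0 ≤ t) (hx : x ∈ coneOf G) : t • x ∈ coneOf G := by
  obtain ⟨c, hc, rfl⟩ := hx
  exact ⟨fun g => t * c g, fun g => mul_nonneg ht (hc g), by
    rw [Finset.smul_sum]; simp [smul_smul]⟩

lemma gen_mem_coneOf {G : Finset (Fin n → ℤ)} {g : Fin n → ℤ} (hg : g ∈ G) :
    ιv g ∈ coneOf G := by
  classical
  refine ⟨fun h => if h = g then 1 else 0, fun h => by positivity, ?_⟩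
  show ιv g = ∑ h ∈ G, (if h = g then (1:ℝ) else 0) • ιv h
  have : ∀ h ∈ G, (if h = g then (1:ℝ) else 0) • ιv h = if h = g then ιv h else 0 := by
    intro h _; split <;> simp
  rw [Finset.sum_congr rfl this, Finset.sum_ite_eq' G g (fun h => ιv h), if_pos hg]

lemma coneOf_mono {S G : Finset (Fin n → ℤ)} (hSG : S ⊆ G) : coneOf S ⊆ coneOf G := by
  classical
  rintro x ⟨c, hc, rfl⟩
  refine ⟨fun g => if g ∈ S then c g else 0, fun g => by by_cases h : g ∈ S <;> simp [h, hc], ?_⟩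
  rw [← Finset.sum_subset hSG (fun g _ hgS => by simp [if_neg hgS])]
  exact Finset.sum_congr rfl fun g hg => by simp [if_pos hg]

end ConeBasics

/-! ### Chunk 2: pairing linearity -/

section Pairing

variable {n : ℕ}

def pairingL (u : Fin n → ℤ) : (Fin n → ℝ) →ₗ[ℝ] ℝ where
  toFun := pairing u
  map_add' x y := by simp [pairing, mul_add, Finset.sum_add_distrib]
  map_smul' t x := by simp [pairing, Finset.mul_sum, mul_left_comm]

lemma pairing_eq_L (u : Fin n → ℤ) (x : Fin n → ℝ) : pairing u x = pairingL u x := rfl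

lemma pairing_vanish_of_nonneg_ball {u : Fin n → ℤ} {z : Fin n → ℝ} {r : ℝ} (hr : 0 < r)
    (h0 : pairing u z = 0) (hball : ∀ y ∈ Metric.ball z r, 0 ≤ pairing u y) :
    ∀ y, pairing u y = 0 := by
  have key : ∀ w : Fin n → ℝ, 0 ≤ pairing u w := by
    intro w
    rcases eq_or_ne w 0 with rfl | hw
    · simp [pairing]
    · have hnw : 0 < ‖w‖ := norm_pos_iff.2 hw
      set t : ℝ := r / (2 * ‖w‖) with ht_def
      have ht : 0 < t := by positivity
      have hmem : z + t • w ∈ Metric.ball z r := by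
        rw [Metric.mem_ball, dist_eq_norm, add_sub_cancel_left, norm_smul]
        rw [Real.norm_eq_abs, abs_of_pos ht, ht_def]
        rw [div_mul_eq_mul_div, mul_comm]
        rw [mul_div_assoc]
        calc ‖w‖ * (r / (2 * ‖w‖)) = r / 2 * (‖w‖ / ‖w‖) := by ring
        _ = r / 2 := by rw [div_self (ne_of_gt hnw), mul_one]
        _ < r := by linarith
      have := hball _ hmem
      rw [pairing_eq_L, map_add, map_smul, ← pairing_eq_L, ← pairing_eq_L, h0, zero_add,
        smul_eq_mul] at this
      exact nonneg_of_mul_nonneg_right this ht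
  intro y
  have h1 := key y
  have h2 := key (-y)
  rw [pairing_eq_L, map_neg, ← pairing_eq_L] at h2
  linarith

lemma pairing_vanish_of_span_top {u : Fin n → ℤ} {σ : Set (Fin n → ℝ)}
    (hs : Submodule.span ℝ σ = ⊤) (h : ∀ y ∈ σ, pairing u y = 0) :
    ∀ y, pairing u y = 0 := by
  have hsub : σ ⊆ (LinearMap.ker (pairingL u) : Set (Fin n → ℝ)) := fun y hy => h y hy
  have := Submodule.span_le.2 hsub
  rw [hs, top_le_iff] at this
  intro y
  have : y ∈ LinearMap.ker (pairingL u) := this ▸ Submodule.mem_top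
  exact this

end Pairing

/-! ### Chunk 3: closedness of finitely generated cones -/

section Closed

variable {n : ℕ}

def sumMap (S : Finset (Fin n → ℤ)) : (↥S → ℝ) →ₗ[ℝ] (Fin n → ℝ) where
  toFun c := ∑ g : ↥S, c g • ιv (g : Fin n → ℤ)
  map_add' c d := by simp [add_smul, Finset.sum_add_distrib]
  map_smul' t c := by simp [Finset.smul_sum, smul_smul]

lemma mem_coneOf_iff_sumMap {S : Finset (Fin n → ℤ)} {x : Fin n → ℝ} :
    x ∈ coneOf S ↔ ∃ c : ↥S → ℝ, (∀ g, 0 ≤ c g) ∧ x = sumMap S c := by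
  classical
  constructor
  · rintro ⟨c, hc, rfl⟩
    refine ⟨fun g => c g, fun g => hc g, ?_⟩
    show ∑ g ∈ S, c g • ιv g = ∑ g : ↥S, c ↑g • ιv (g : Fin n → ℤ)
    rw [← Finset.sum_coe_sort S (fun g => c g • ιv g)]
  · rintro ⟨c, hc, rfl⟩
    refine ⟨fun g => if h : g ∈ S then c ⟨g, h⟩ else 0,
      fun g => by by_cases h : g ∈ S <;> simp [h, hc], ?_⟩
    show sumMap S c = ∑ g ∈ S, (if h : g ∈ S then c ⟨g, h⟩ else 0) • ιv g
    rw [← Finset.sum_coe_sort S (fun g => (if h : g ∈ S then c ⟨g, h⟩ else 0) • ιv g)]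
    exact Finset.sum_congr rfl fun g _ => by rw [dif_pos g.2]

lemma isClosed_coneOf_of_li {S : Finset (Fin n → ℤ)}
    (hS : LinearIndependent ℝ (fun g : ↥S => ιv (g : Fin n → ℤ))) :
    IsClosed (coneOf S) := by
  have hker : LinearMap.ker (sumMap S) = ⊥ := by
    rw [LinearMap.ker_eq_bot']
    intro c hc
    have := Fintype.linearIndependent_iff.1 hS c hc
    funext g; exact this g
  have hce := LinearMap.isClosedEmbedding_of_injective hker
  have himg : coneOf S = (sumMap S) '' {c : ↥S → ℝ | ∀ g, 0 ≤ c g} := by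
    ext x
    rw [mem_coneOf_iff_sumMap]
    constructor
    · rintro ⟨c, hc, rfl⟩; exact ⟨c, hc, rfl⟩
    · rintro ⟨c, hc, rfl⟩; exact ⟨c, hc, rfl⟩
  rw [himg]
  apply hce.isClosedMap
  have : {c : ↥S → ℝ | ∀ g, 0 ≤ c g} = ⋂ g, {c : ↥S → ℝ | 0 ≤ c g} := by
    ext c; simp
  rw [this]
  exact isClosed_iInter fun g => isClosed_le continuous_const (continuous_apply g)

lemma carath (k : ℕ) : ∀ (T : Finset (Fin n → ℤ)), T.card ≤ k →
    ∀ (c : (Fin n → ℤ) → ℝ), (∀ g, 0 ≤ c g) →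
    ∃ S, S ⊆ T ∧ LinearIndependent ℝ (fun g : ↥S => ιv (g : Fin n → ℤ)) ∧
      (∑ g ∈ T, c g • ιv g) ∈ coneOf S := by
  classical
  induction k with
  | zero =>
    intro T hT c hc
    rw [Nat.le_zero, Finset.card_eq_zero] at hT
    subst hT
    exact ⟨∅, Finset.Subset.refl _, linearIndependent_empty_type, by simp [zero_mem_coneOf]⟩
  | succ k ih =>
    intro T hT c hc
    by_cases hLI : LinearIndependent ℝ (fun g : ↥T => ιv (g : Fin n → ℤ))
    · exact ⟨T, Finset.Subset.refl _, hLI, ⟨c, hc, rfl⟩⟩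
    · obtain ⟨d, hd0, g₁, hg₁⟩ := Fintype.not_linearIndependent_iff.1 hLI
      -- get d' with a positive coordinate
      obtain ⟨d', hd'0, g₂, hg₂⟩ :
          ∃ d' : ↥T → ℝ, (∑ g : ↥T, d' g • ιv (g : Fin n → ℤ)) = 0 ∧ ∃ g, 0 < d' g := by
        rcases lt_trichotomy (d g₁) 0 with h | h | h
        · refine ⟨-d, ?_, g₁, by simpa using h⟩
          simp only [Pi.neg_apply, neg_smul, Finset.sum_neg_distrib, hd0, neg_zero]
        · exact absurd h hg₁
        · exact ⟨d, hd0, g₁, h⟩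
      set F : Finset (↥T) := Finset.univ.filter (fun g => 0 < d' g) with hF_def
      have hFne : F.Nonempty := ⟨g₂, Finset.mem_filter.2 ⟨Finset.mem_univ _, hg₂⟩⟩
      set ratio : ↥T → ℝ := fun g => c ↑g / d' g with hratio_def
      set t : ℝ := F.inf' hFne ratio with ht_def
      obtain ⟨g₀, hg₀F, hg₀⟩ := F.exists_mem_eq_inf' hFne ratio
      have hg₀pos : 0 < d' g₀ := by
        have := Finset.mem_filter.1 hg₀F; exact this.2
      have ht_nonneg : 0 ≤ t := by
        rw [ht_def]
        apply Finset.le_inf'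
        intro g hg
        have hpos : 0 < d' g := (Finset.mem_filter.1 hg).2
        exact div_nonneg (hc ↑g) (le_of_lt hpos)
      set D : (Fin n → ℤ) → ℝ := fun g => if h : g ∈ T then d' ⟨g, h⟩ else 0 with hD_def
      have hDsum : ∑ g ∈ T, D g • ιv g = 0 := by
        rw [← Finset.sum_coe_sort T (fun g => D g • ιv g)]
        rw [← hd'0]
        exact Finset.sum_congr rfl fun g _ => by simp [hD_def, g.2]
      set c' : (Fin n → ℤ) → ℝ := fun g => c g - t * D g with hc'_def
      have hc'_nonneg : ∀ g, 0 ≤ c' g := by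
        intro g
        rw [hc'_def]
        by_cases h : g ∈ T
        · simp only [hD_def, dif_pos h]
          rcases le_or_gt (d' ⟨g, h⟩) 0 with hd | hd
          · have : t * d' ⟨g, h⟩ ≤ 0 := mul_nonpos_of_nonneg_of_nonpos ht_nonneg hd
            have := hc g; linarith
          · have hmem : (⟨g, h⟩ : ↥T) ∈ F := Finset.mem_filter.2 ⟨Finset.mem_univ _, hd⟩
            have : t ≤ ratio ⟨g, h⟩ := by rw [ht_def]; exact Finset.inf'_le _ hmem
            have h2 : t * d' ⟨g, h⟩ ≤ c g := by
              rw [hratio_def] at this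
              calc t * d' ⟨g, h⟩ ≤ (c g / d' ⟨g, h⟩) * d' ⟨g, h⟩ :=
                mul_le_mul_of_nonneg_right this (le_of_lt hd)
              _ = c g := by field_simp
            linarith
        · simp only [hD_def, dif_neg h, mul_zero, sub_zero]; exact hc g
      have hsum_eq : ∑ g ∈ T, c' g • ιv g = ∑ g ∈ T, c g • ιv g := by
        have : ∀ g ∈ T, c' g • ιv g = c g • ιv g - (t * D g) • ιv g := by
          intro g _; rw [hc'_def]; simp only; rw [sub_smul]
        rw [Finset.sum_congr rfl this, Finset.sum_sub_distrib]
        have : ∑ g ∈ T, (t * D g) • ιv g = t • ∑ g ∈ T, D g • ιv g := by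
          rw [Finset.smul_sum]
          exact Finset.sum_congr rfl fun g _ => by rw [smul_smul]
        rw [this, hDsum, smul_zero, sub_zero]
      have hc'g₀ : c' ↑g₀ = 0 := by
        rw [hc'_def]
        simp only [hD_def, dif_pos g₀.2]
        have : (⟨(↑g₀ : Fin n → ℤ), g₀.2⟩ : ↥T) = g₀ := Subtype.ext rfl
        rw [this, ht_def, hg₀]
        simp only [hratio_def]
        field_simp
        ring
      have hT' : (↑g₀ : Fin n → ℤ) ∈ T := g₀.2
      have herase : ∑ g ∈ T.erase ↑g₀, c' g • ιv g = ∑ g ∈ T, c' g • ιv g :=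
        Finset.sum_erase T (by rw [hc'g₀, zero_smul])
      have hcard : (T.erase ↑g₀).card ≤ k := by
        rw [Finset.card_erase_of_mem hT']
        omega
      obtain ⟨S, hSsub, hSLI, hSx⟩ := ih (T.erase ↑g₀) hcard c' hc'_nonneg
      refine ⟨S, hSsub.trans (Finset.erase_subset _ _), hSLI, ?_⟩
      rwa [herase, hsum_eq] at hSx

lemma isClosed_coneOf (G : Finset (Fin n → ℤ)) : IsClosed (coneOf G) := by
  classical
  have hrep : coneOf G = ⋃ S ∈ {S : Finset (Fin n → ℤ) |
      S ⊆ G ∧ LinearIndependent ℝ (fun g : ↥S => ιv (g : Fin n → ℤ))}, coneOf S := by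
    ext x
    simp only [Set.mem_iUnion, Set.mem_setOf_eq]
    constructor
    · rintro ⟨c, hc, rfl⟩
      obtain ⟨S, hSG, hLI, hx⟩ := carath G.card G le_rfl c hc
      exact ⟨S, ⟨⟨hSG, hLI⟩, hx⟩⟩
    · rintro ⟨S, ⟨hSG, _⟩, hx⟩
      exact coneOf_mono hSG hx
  rw [hrep]
  apply Set.Finite.isClosed_biUnion
  · apply Set.Finite.subset (G.powerset : Finset _).finite_toSet
    intro S hS
    simp only [Finset.coe_powerset, Set.mem_preimage, Set.mem_powerset_iff, Finset.coe_subset]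
    exact hS.1
  · exact fun S hS => isClosed_coneOf_of_li hS.2

end Closed

/-! ### Chunk 4: fan geometry -/

section FanGeometry

variable {n : ℕ}

lemma Fan.isClosed_cone (Δ : Fan n) {σ} (hσ : σ ∈ Δ.cones) : IsClosed σ := by
  obtain ⟨G, rfl⟩ := Δ.rat σ hσ
  exact isClosed_coneOf G

lemma Fan.add_mem_cone (Δ : Fan n) {σ} (hσ : σ ∈ Δ.cones) {x y : Fin n → ℝ}
    (hx : x ∈ σ) (hy : y ∈ σ) : x + y ∈ σ := by
  obtain ⟨G, rfl⟩ := Δ.rat σ hσ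
  exact add_mem_coneOf hx hy

lemma Fan.smul_mem_cone (Δ : Fan n) {σ} (hσ : σ ∈ Δ.cones) {x : Fin n → ℝ} {t : ℝ}
    (ht : 0 ≤ t) (hx : x ∈ σ) : t • x ∈ σ := by
  obtain ⟨G, rfl⟩ := Δ.rat σ hσ
  exact smul_mem_coneOf ht hx

lemma subset_of_ball_inter (Δ : Fan n) {σ σ' : Set (Fin n → ℝ)}
    (hσ : σ ∈ Δ.cones) (hσ' : σ' ∈ Δ.cones) {u : Fin n → ℝ} {r : ℝ} (hr : 0 < r)
    (hball : Metric.ball u r ⊆ σ) (hu' : u ∈ σ') : σ ⊆ σ' := by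
  obtain ⟨w, hw, heq⟩ := Δ.inter_face σ hσ σ' hσ'
  have hu : u ∈ σ := hball (Metric.mem_ball_self hr)
  have huface : u ∈ σ ∩ σ' := ⟨hu, hu'⟩
  rw [heq] at huface
  have h0 : pairing w u = 0 := huface.2
  have hvanish : ∀ y, pairing w y = 0 :=
    pairing_vanish_of_nonneg_ball hr h0 (fun y hy => hw y (hball hy))
  intro y hy
  have : y ∈ σ ∩ σ' := by rw [heq]; exact ⟨hy, hvanish y⟩
  exact this.2

lemma subset_of_inter_span_top (Δ : Fan n) {σ σ' : Set (Fin n → ℝ)}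
    (hσ : σ ∈ Δ.cones) (hσ' : σ' ∈ Δ.cones)
    (hspan : Submodule.span ℝ (σ ∩ σ') = ⊤) : σ ⊆ σ' := by
  obtain ⟨w, hw, heq⟩ := Δ.inter_face σ hσ σ' hσ'
  have hvan : ∀ y ∈ σ ∩ σ', pairing w y = 0 := by
    intro y hy; rw [heq] at hy; exact hy.2
  have hvanish : ∀ y, pairing w y = 0 := pairing_vanish_of_span_top hspan hvan
  intro y hy
  have : y ∈ σ ∩ σ' := by rw [heq]; exact ⟨hy, hvanish y⟩
  exact this.2

lemma eq_of_inter_span_top (Δ : Fan n) {σ σ' : Set (Fin n → ℝ)}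
    (hσ : σ ∈ Δ.cones) (hσ' : σ' ∈ Δ.cones)
    (hspan : Submodule.span ℝ (σ ∩ σ') = ⊤) : σ = σ' := by
  refine Set.Subset.antisymm (subset_of_inter_span_top Δ hσ hσ' hspan) ?_
  exact subset_of_inter_span_top Δ hσ' hσ (by rwa [Set.inter_comm])

lemma eq_of_ball (Δ : Fan n) {σ σ' : Set (Fin n → ℝ)}
    (hσ : σ ∈ Δ.cones) (hσ' : σ' ∈ Δ.cones) {u : Fin n → ℝ} {r : ℝ} (hr : 0 < r)
    (hball : Metric.ball u r ⊆ σ) (hu' : u ∈ σ')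
    (hspan : Submodule.span ℝ σ = ⊤) : σ = σ' := by
  have hsub : σ ⊆ σ' := subset_of_ball_inter Δ hσ hσ' hr hball hu'
  have hinter : σ ∩ σ' = σ := Set.inter_eq_left.2 hsub
  refine Set.Subset.antisymm hsub ?_
  exact subset_of_inter_span_top Δ hσ' hσ
    (by rw [Set.inter_comm, hinter, hspan])

lemma exists_avoid {𝒲 : Set (Submodule ℝ (Fin n → ℝ))} (hfin : 𝒲.Finite) :
    (∀ W ∈ 𝒲, W ≠ ⊤) → ∀ U : Set (Fin n → ℝ), IsOpen U → U.Nonempty →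
      ∃ u ∈ U, ∀ W ∈ 𝒲, u ∉ W := by
  refine Set.Finite.induction_on _ hfin ?_ ?_
  · intro _ U _ hne
    obtain ⟨u, hu⟩ := hne
    exact ⟨u, hu, by simp⟩
  · rintro W 𝒲 hWmem hfin ih hproper U hUopen hUne
    have hWclosed : IsClosed (W : Set (Fin n → ℝ)) := W.closed_of_finiteDimensional
    have hU'open : IsOpen (U \ (W : Set (Fin n → ℝ))) := hUopen.sdiff hWclosed
    have hU'ne : (U \ (W : Set (Fin n → ℝ))).Nonempty := by
      by_contra hcon
      rw [Set.not_nonempty_iff_eq_empty, Set.diff_eq_empty] at hcon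
      obtain ⟨x, hx⟩ := hUne
      have : W = ⊤ := W.eq_top_of_nonempty_interior'
        ⟨x, interior_maximal hcon hUopen hx⟩
      exact hproper W (Set.mem_insert _ _) this
    obtain ⟨u, hu, hu2⟩ := ih (fun W' hW' => hproper W' (Set.mem_insert_of_mem _ hW'))
      (U \ (W : Set (Fin n → ℝ))) hU'open hU'ne
    refine ⟨u, hu.1, ?_⟩
    intro W' hW'
    rcases Set.mem_insert_iff.1 hW' with rfl | hW'
    · exact hu.2
    · exact hu2 W' hW'

lemma exists_ball_of_span_top {G : Finset (Fin n → ℤ)}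
    (hspan : Submodule.span ℝ (coneOf G) = ⊤) :
    ∃ z r, 0 < r ∧ Metric.ball z r ⊆ coneOf G := by
  have hrange : LinearMap.range (sumMap G) = ⊤ := by
    rw [eq_top_iff, ← hspan]
    apply Submodule.span_le.2
    intro x hx
    obtain ⟨c, hc, rfl⟩ := mem_coneOf_iff_sumMap.1 hx
    exact ⟨c, rfl⟩
  obtain ⟨s, hs⟩ := (sumMap G).exists_rightInverse_of_surjective hrange
  have hscont : Continuous s := s.continuous_of_finiteDimensional
  have hopen : IsOpen (s ⁻¹' (Metric.ball (0 : ↥G → ℝ) 1)) :=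
    Metric.isOpen_ball.preimage hscont
  have h0mem : (0 : Fin n → ℝ) ∈ s ⁻¹' (Metric.ball (0 : ↥G → ℝ) 1) := by
    simp [Set.mem_preimage, map_zero]
  obtain ⟨r, hr, hrball⟩ := Metric.isOpen_iff.1 hopen 0 h0mem
  refine ⟨sumMap G (fun _ => 1), r, hr, ?_⟩
  intro y hy
  set h := y - sumMap G (fun _ => 1) with hh_def
  have hhr : h ∈ Metric.ball (0 : Fin n → ℝ) r := by
    rw [Metric.mem_ball, dist_eq_norm, sub_zero, hh_def, ← dist_eq_norm]
    exact hy
  have hsh : ‖s h‖ < 1 := by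
    have := hrball hhr
    rw [Set.mem_preimage, Metric.mem_ball, dist_eq_norm, sub_zero] at this
    exact this
  set c : ↥G → ℝ := (fun _ => 1) + s h with hc_def
  have hcnn : ∀ g, 0 ≤ c g := by
    intro g
    have : |s h g| ≤ ‖s h‖ := by
      rw [← Real.norm_eq_abs]
      exact norm_le_pi_norm (s h) g
    have h1 : -1 < s h g := by
      have := abs_lt.1 (lt_of_le_of_lt this hsh)
      linarith [this.1]
    simp only [hc_def, Pi.add_apply]
    linarith
  refine mem_coneOf_iff_sumMap.2 ⟨c, hcnn, ?_⟩
  rw [hc_def, map_add]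
  have : sumMap G (s h) = h := LinearMap.ext_iff.1 hs h
  rw [this, hh_def]
  abel

lemma exists_fulldim_cone (Δ : Fan n) (hc : Δ.support = Set.univ) (x : Fin n → ℝ) :
    ∃ σ ∈ Δ.cones, Submodule.span ℝ σ = ⊤ ∧ x ∈ σ := by
  by_contra hcon
  push_neg at hcon
  set K := ⋃ σ ∈ {σ ∈ Δ.cones | Submodule.span ℝ σ = ⊤}, σ with hK_def
  have hKclosed : IsClosed K :=
    Set.Finite.isClosed_biUnion (Δ.finite.subset (Set.sep_subset _ _))
      (fun σ hσ => Δ.isClosed_cone hσ.1)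
  have hxK : x ∉ K := by
    intro hxK
    obtain ⟨σ, hσ, hxσ⟩ := Set.mem_iUnion₂.1 hxK
    exact hcon σ hσ.1 hσ.2 hxσ
  set 𝒲 := (fun σ : Set (Fin n → ℝ) => Submodule.span ℝ σ) ''
    {σ ∈ Δ.cones | Submodule.span ℝ σ ≠ ⊤} with h𝒲_def
  have h𝒲fin : 𝒲.Finite := Set.Finite.image _ (Δ.finite.subset (Set.sep_subset _ _))
  have h𝒲proper : ∀ W ∈ 𝒲, W ≠ ⊤ := by
    rintro W ⟨σ, hσ, rfl⟩
    exact hσ.2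
  obtain ⟨u, huU, hu⟩ := exists_avoid h𝒲fin h𝒲proper Kᶜ hKclosed.isOpen_compl
    ⟨x, hxK⟩
  have husupp : u ∈ Δ.support := by rw [hc]; trivial
  obtain ⟨σ, hσ, huσ⟩ := Set.mem_iUnion₂.1 husupp
  by_cases hsp : Submodule.span ℝ σ = ⊤
  · exact huU (Set.mem_biUnion ⟨hσ, hsp⟩ huσ)
  · exact hu (Submodule.span ℝ σ) ⟨σ, ⟨hσ, hsp⟩, rfl⟩ (Submodule.subset_span huσ)

lemma exists_delta (Δ : Fan n) (x : Fin n → ℝ) :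
    ∃ δ, 0 < δ ∧ ∀ σ ∈ Δ.cones, x ∉ σ → ∀ y ∈ Metric.ball x δ, y ∉ σ := by
  set K := ⋃ σ ∈ {σ ∈ Δ.cones | x ∉ σ}, σ with hK_def
  have hKclosed : IsClosed K :=
    Set.Finite.isClosed_biUnion (Δ.finite.subset (Set.sep_subset _ _))
      (fun σ hσ => Δ.isClosed_cone hσ.1)
  have hxK : x ∉ K := by
    intro hxK
    obtain ⟨σ, hσ, hxσ⟩ := Set.mem_iUnion₂.1 hxK
    exact hσ.2 hxσ
  obtain ⟨δ, hδ, hball⟩ := Metric.isOpen_iff.1 hKclosed.isOpen_compl x hxK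
  refine ⟨δ, hδ, ?_⟩
  intro σ hσ hxσ y hy hyσ
  exact hball hy (Set.mem_biUnion ⟨hσ, hxσ⟩ hyσ)

lemma exists_inner_point (Δ : Fan n) {σ : Set (Fin n → ℝ)} (hσ : σ ∈ Δ.cones)
    (hspan : Submodule.span ℝ σ = ⊤) {x : Fin n → ℝ} (hx : x ∈ σ) {δ : ℝ} (hδ : 0 < δ) :
    ∃ u r, 0 < r ∧ Metric.ball u r ⊆ σ ∧ Metric.ball u r ⊆ Metric.ball x δ := by
  obtain ⟨G, rfl⟩ := Δ.rat σ hσ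
  obtain ⟨z, r₀, hr₀, hball⟩ := exists_ball_of_span_top hspan
  set ε : ℝ := δ / (r₀ + ‖z‖ + 1) with hε_def
  have hε : 0 < ε := by
    apply div_pos hδ
    positivity
  refine ⟨x + ε • z, ε * r₀, by positivity, ?_, ?_⟩
  · intro y hy
    set w : Fin n → ℝ := ε⁻¹ • (y - x) with hw_def
    have hwz : w ∈ Metric.ball z r₀ := by
      rw [Metric.mem_ball, dist_eq_norm, hw_def]
      have : ε⁻¹ • (y - x) - z = ε⁻¹ • (y - (x + ε • z)) := by
        have hne : ε ≠ 0 := ne_of_gt hε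
        match_scalars <;> field_simp
      rw [this, norm_smul, Real.norm_eq_abs, abs_of_pos (inv_pos.2 hε)]
      have hdist : ‖y - (x + ε • z)‖ < ε * r₀ := by
        rw [← dist_eq_norm]; exact hy
      calc ε⁻¹ * ‖y - (x + ε • z)‖ < ε⁻¹ * (ε * r₀) :=
        mul_lt_mul_of_pos_left hdist (inv_pos.2 hε)
      _ = r₀ := by field_simp
    have : y = x + ε • w := by
      have hne : ε ≠ 0 := ne_of_gt hε
      rw [hw_def]
      match_scalars <;> field_simp <;> ring
    rw [this]
    exact add_mem_coneOf hx (smul_mem_coneOf (le_of_lt hε) (hball hwz))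
  · intro y hy
    rw [Metric.mem_ball]
    calc dist y x ≤ dist y (x + ε • z) + dist (x + ε • z) x := dist_triangle _ _ _
    _ < ε * r₀ + ε * ‖z‖ := by
        apply add_lt_add_of_lt_of_le hy
        rw [dist_eq_norm]
        have : x + ε • z - x = ε • z := by abel
        rw [this, norm_smul, Real.norm_eq_abs, abs_of_pos hε]
    _ = ε * (r₀ + ‖z‖) := by ring
    _ < ε * (r₀ + ‖z‖ + 1) := by
        apply mul_lt_mul_of_pos_left _ hε
        linarith
    _ = δ := by
        rw [hε_def]
        field_simp

end FanGeometry

/-! ### Chunk 5: well-posedness -/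

section Wellposed

variable {n : ℕ}

lemma wellposed (Δ : Fan n) (hc : Δ.support = Set.univ)
    (p : Set (Fin n → ℝ) → MvPolynomial (Fin n) ℤ)
    (H : ∀ σ ∈ Δ.cones, ∀ σ' ∈ Δ.cones, Submodule.span ℝ σ = ⊤ → Submodule.span ℝ σ' = ⊤ →
        Module.finrank ℝ ↥(Submodule.span ℝ (σ ∩ σ')) + 1 = n →
        ∀ x ∈ σ ∩ σ', pev (p σ) x = pev (p σ') x)
    {σ σ' : Set (Fin n → ℝ)} (hσ : σ ∈ Δ.cones) (hσ' : σ' ∈ Δ.cones)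
    (hs : Submodule.span ℝ σ = ⊤) (hs' : Submodule.span ℝ σ' = ⊤)
    {x : Fin n → ℝ} (hx : x ∈ σ) (hx' : x ∈ σ') :
    pev (p σ) x = pev (p σ') x := by
  classical
  obtain ⟨δ, hδ, hδprop⟩ := exists_delta Δ x
  set WS : Set (Submodule ℝ (Fin n → ℝ)) :=
    {W | (∃ σ₁ ∈ Δ.cones, ∃ σ₂ ∈ Δ.cones, W = Submodule.span ℝ (σ₁ ∩ σ₂)) ∧ W ≠ ⊤ ∧
      Module.finrank ℝ ↥W + 1 ≠ n} with hWS_def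
  have hWSfin : WS.Finite := by
    apply Set.Finite.subset (Set.Finite.image
      (fun q : Set (Fin n → ℝ) × Set (Fin n → ℝ) => Submodule.span ℝ (q.1 ∩ q.2))
      (Δ.finite.prod Δ.finite))
    rintro W ⟨⟨σ₁, h₁, σ₂, h₂, rfl⟩, -, -⟩
    exact ⟨(σ₁, σ₂), ⟨h₁, h₂⟩, rfl⟩
  have hWSproper : ∀ W ∈ WS, W ≠ ⊤ := fun W hW => hW.2.1
  obtain ⟨u₀, r, hr, hballσ, hballδ⟩ := exists_inner_point Δ hσ hs hx hδ
  obtain ⟨u, huball, hu⟩ := exists_avoid hWSfin hWSproper (Metric.ball u₀ r)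
    Metric.isOpen_ball ⟨u₀, Metric.mem_ball_self hr⟩
  have huσ : u ∈ σ := hballσ huball
  have huδ : u ∈ Metric.ball x δ := hballδ huball
  obtain ⟨ru, hru, hub⟩ := Metric.isOpen_iff.1 Metric.isOpen_ball u huball
  have hubσ : Metric.ball u ru ⊆ σ := fun y hy => hballσ (hub hy)
  set WS2 : Set (Submodule ℝ (Fin n → ℝ)) :=
    (fun W => W ⊔ Submodule.span ℝ ({u} : Set (Fin n → ℝ))) '' WS with hWS2_def
  have hWS2fin : WS2.Finite := hWSfin.image _
  have hWS2proper : ∀ W ∈ WS2, W ≠ ⊤ := by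
    rintro _ ⟨W, hW, rfl⟩ htop
    have h1 : Module.finrank ℝ ↥W < n := by
      have := Submodule.finrank_lt (K := ℝ) (V := Fin n → ℝ)
        hW.2.1
      rwa [Module.finrank_fin_fun] at this
    have h2 : Module.finrank ℝ ↥W + 1 ≠ n := hW.2.2
    have hsing : Module.finrank ℝ ↥(Submodule.span ℝ ({u} : Set (Fin n → ℝ))) ≤ 1 := by
      rcases eq_or_ne u 0 with rfl | hu0
      · rw [Submodule.span_zero_singleton]
        simp
      · rw [show Submodule.span ℝ ({u} : Set (Fin n → ℝ)) = (ℝ ∙ u) from rfl,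
          finrank_span_singleton hu0]
    have hineq := Submodule.finrank_sup_add_finrank_inf_eq W
      (Submodule.span ℝ ({u} : Set (Fin n → ℝ)))
    have htop' : W ⊔ Submodule.span ℝ ({u} : Set (Fin n → ℝ)) = ⊤ := htop
    have htopn : Module.finrank ℝ
        ↥(W ⊔ Submodule.span ℝ ({u} : Set (Fin n → ℝ))) = n := by
      rw [htop', finrank_top, Module.finrank_fin_fun]
    omega
  obtain ⟨v₀, rv, hrv, hballσ', hballδ'⟩ := exists_inner_point Δ hσ' hs' hx' hδ
  obtain ⟨v, hvball, hv⟩ := exists_avoid hWS2fin hWS2proper (Metric.ball v₀ rv)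
    Metric.isOpen_ball ⟨v₀, Metric.mem_ball_self hrv⟩
  have hvσ' : v ∈ σ' := hballσ' hvball
  have hvδ : v ∈ Metric.ball x δ := hballδ' hvball
  obtain ⟨rv', hrv', hvb⟩ := Metric.isOpen_iff.1 Metric.isOpen_ball v hvball
  have hvbσ' : Metric.ball v rv' ⊆ σ' := fun y hy => hballσ' (hvb hy)
  -- the segment
  set γ : ℝ → (Fin n → ℝ) := fun t => (1 - t) • u + t • v with hγ_def
  have hγcont : Continuous γ := by
    apply Continuous.add
    · exact (continuous_const.sub continuous_id).smul continuous_const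
    · exact continuous_id.smul continuous_const
  have hγ0 : γ 0 = u := by simp [hγ_def]
  have hγ1 : γ 1 = v := by simp [hγ_def]
  have hγball : ∀ t ∈ Set.Icc (0:ℝ) 1, γ t ∈ Metric.ball x δ := by
    intro t ht
    exact (convex_ball x δ) huδ hvδ (by linarith [ht.2]) ht.1 (by ring)
  have hmemx : ∀ σ₁ ∈ Δ.cones, ∀ t ∈ Set.Icc (0:ℝ) 1, γ t ∈ σ₁ → x ∈ σ₁ := by
    intro σ₁ h₁ t ht hmem
    by_contra hxσ₁
    exact hδprop σ₁ h₁ hxσ₁ _ (hγball t ht) hmem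
  -- good and bad times
  set Good : Set ℝ := ⋃ σ₁ ∈ {σ₁ ∈ Δ.cones | Submodule.span ℝ σ₁ = ⊤ ∧
    pev (p σ₁) x = pev (p σ) x}, (Set.Icc (0:ℝ) 1 ∩ γ ⁻¹' σ₁) with hGood_def
  set Bad : Set ℝ := ⋃ σ₁ ∈ {σ₁ ∈ Δ.cones | Submodule.span ℝ σ₁ = ⊤ ∧
    pev (p σ₁) x ≠ pev (p σ) x}, (Set.Icc (0:ℝ) 1 ∩ γ ⁻¹' σ₁) with hBad_def
  have hGoodclosed : IsClosed Good :=
    Set.Finite.isClosed_biUnion (Δ.finite.subset (Set.sep_subset _ _))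
      (fun σ₁ h₁ => isClosed_Icc.inter ((Δ.isClosed_cone h₁.1).preimage hγcont))
  have hBadclosed : IsClosed Bad :=
    Set.Finite.isClosed_biUnion (Δ.finite.subset (Set.sep_subset _ _))
      (fun σ₁ h₁ => isClosed_Icc.inter ((Δ.isClosed_cone h₁.1).preimage hγcont))
  have hGoodIcc : Good ⊆ Set.Icc (0:ℝ) 1 := by
    intro t ht
    obtain ⟨σ₁, h₁, hmem⟩ := Set.mem_iUnion₂.1 ht
    exact hmem.1
  have hcover : ∀ t ∈ Set.Icc (0:ℝ) 1, t ∈ Good ∪ Bad := by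
    intro t ht
    obtain ⟨σ₁, h₁, hsp₁, hmem⟩ := exists_fulldim_cone Δ hc (γ t)
    by_cases hval : pev (p σ₁) x = pev (p σ) x
    · exact Or.inl (Set.mem_biUnion ⟨h₁, hsp₁, hval⟩ ⟨ht, hmem⟩)
    · exact Or.inr (Set.mem_biUnion ⟨h₁, hsp₁, hval⟩ ⟨ht, hmem⟩)
  have hdisj : ∀ t, t ∈ Good → t ∈ Bad → False := by
    intro t htG htB
    obtain ⟨σ₁, h₁, hmem₁⟩ := Set.mem_iUnion₂.1 htG
    obtain ⟨σ₂, h₂, hmem₂⟩ := Set.mem_iUnion₂.1 htB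
    have hx₁ : x ∈ σ₁ := hmemx σ₁ h₁.1 t hmem₁.1 hmem₁.2
    have hx₂ : x ∈ σ₂ := hmemx σ₂ h₂.1 t hmem₂.1 hmem₂.2
    have hne : σ₁ ≠ σ₂ := by
      intro h
      rw [h] at h₁
      exact h₂.2.2 h₁.2.2
    have hspan12 : Submodule.span ℝ (σ₁ ∩ σ₂) ≠ ⊤ :=
      fun h => hne (eq_of_inter_span_top Δ h₁.1 h₂.1 h)
    by_cases hrank : Module.finrank ℝ ↥(Submodule.span ℝ (σ₁ ∩ σ₂)) + 1 = n
    · have := H σ₁ h₁.1 σ₂ h₂.1 h₁.2.1 h₂.2.1 hrank x ⟨hx₁, hx₂⟩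
      have hval₁ : pev (p σ₁) x = pev (p σ) x := h₁.2.2
      exact h₂.2.2 (by rw [← this]; exact hval₁)
    · set W := Submodule.span ℝ (σ₁ ∩ σ₂) with hW_def
      have hWmem : W ∈ WS := ⟨⟨σ₁, h₁.1, σ₂, h₂.1, rfl⟩, hspan12, hrank⟩
      have hγtW : γ t ∈ W := Submodule.subset_span ⟨hmem₁.2, hmem₂.2⟩
      rcases eq_or_lt_of_le hmem₁.1.1 with heq | hpos
      · rw [← heq, hγ0] at hγtW
        exact hu W hWmem hγtW
      · have hvmem : v ∈ W ⊔ Submodule.span ℝ ({u} : Set (Fin n → ℝ)) := by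
          have hvu : v = t⁻¹ • (γ t) + (1 - t⁻¹) • u := by
            rw [hγ_def]
            have hne0 : t ≠ 0 := (ne_of_gt hpos)
            match_scalars <;> field_simp <;> ring
          rw [hvu]
          apply Submodule.add_mem
          · exact Submodule.smul_mem _ _ (Submodule.mem_sup_left hγtW)
          · exact Submodule.smul_mem _ _
              (Submodule.mem_sup_right (Submodule.mem_span_singleton_self u))
        exact hv _ ⟨W, hWmem, rfl⟩ hvmem
  have h0 : (0:ℝ) ∈ Good := by
    refine Set.mem_biUnion ⟨hσ, hs, rfl⟩ ⟨⟨le_rfl, zero_le_one⟩, ?_⟩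
    show γ 0 ∈ σ
    rw [hγ0]; exact huσ
  have hGne : Good.Nonempty := ⟨0, h0⟩
  have hGbdd : BddAbove Good := ⟨1, fun t ht => (hGoodIcc ht).2⟩
  have hs₀mem : sSup Good ∈ Good := hGoodclosed.csSup_mem hGne hGbdd
  have hs₀le1 : sSup Good ≤ 1 := (hGoodIcc hs₀mem).2
  have h1good : (1:ℝ) ∈ Good := by
    rcases eq_or_lt_of_le hs₀le1 with heq | hlt
    · rw [← heq]; exact hs₀mem
    · exfalso
      have hsub : Set.Ioc (sSup Good) 1 ⊆ Bad := by
        intro t ht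
        have htI : t ∈ Set.Icc (0:ℝ) 1 :=
          ⟨le_trans (hGoodIcc hs₀mem).1 (le_of_lt ht.1), ht.2⟩
        rcases hcover t htI with hg | hb
        · exact absurd (le_csSup hGbdd hg) (not_le.2 ht.1)
        · exact hb
      have hcl : sSup Good ∈ closure (Set.Ioc (sSup Good) 1) := by
        rw [closure_Ioc (ne_of_lt hlt)]
        exact ⟨le_rfl, hs₀le1⟩
      have hs₀bad : sSup Good ∈ Bad :=
        closure_minimal hsub hBadclosed hcl
      exact hdisj _ hs₀mem hs₀bad
  obtain ⟨σ₁, h₁, hmem₁⟩ := Set.mem_iUnion₂.1 h1good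
  have hvσ₁ : v ∈ σ₁ := by rw [← hγ1]; exact hmem₁.2
  have hσ'eq : σ' = σ₁ := eq_of_ball Δ hσ' h₁.1 hrv' hvbσ' hvσ₁ hs'
  rw [hσ'eq]
  exact h₁.2.2.symm

end Wellposed

/-! ### Chunk 6: main theorem -/

section Main

variable {n : ℕ}

lemma gensum_mem_coneOf (G : Finset (Fin n → ℤ)) : (∑ g ∈ G, ιv g) ∈ coneOf G := by
  classical
  refine ⟨fun g => if g ∈ G then 1 else 0, fun g => by by_cases h : g ∈ G <;> simp [h], ?_⟩
  show ∑ g ∈ G, ιv g = ∑ g ∈ G, (if g ∈ G then (1:ℝ) else 0) • ιv g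
  exact Finset.sum_congr rfl fun g hg => by rw [if_pos hg, one_smul]

lemma face_eq_self_of_gensum {G : Finset (Fin n → ℤ)} {F : Set (Fin n → ℝ)}
    (hface : IsFaceOf F (coneOf G)) (hz : (∑ g ∈ G, ιv g) ∈ F) : F = coneOf G := by
  obtain ⟨w, hw, heq⟩ := hface
  rw [heq] at hz
  have hz0 : pairing w (∑ g ∈ G, ιv g) = 0 := hz.2
  have hsum : ∑ g ∈ G, pairing w (ιv g) = 0 := by
    rw [← hz0, pairing_eq_L, map_sum]
    exact Finset.sum_congr rfl fun g _ => rfl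
  have hterm : ∀ g ∈ G, pairing w (ιv g) = 0 := by
    have := (Finset.sum_eq_zero_iff_of_nonneg
      (fun g (_ : g ∈ G) => hw (ιv g) (gen_mem_coneOf ‹g ∈ G›))).1 hsum
    exact this
  have hvanish : ∀ y ∈ coneOf G, pairing w y = 0 := by
    rintro y ⟨c, hc, rfl⟩
    rw [pairing_eq_L, map_sum]
    apply Finset.sum_eq_zero
    intro g hg
    rw [map_smul, smul_eq_mul]
    have : pairingL w (ιv g) = 0 := hterm g hg
    rw [show pairingL w (fun i => ((g i : ℝ))) = pairingL w (ιv g) from rfl, this, mul_zero]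
  rw [heq]
  ext y
  constructor
  · exact fun hy => hy.1
  · exact fun hy => ⟨hy, hvanish y hy⟩

end Main


/-- Let `Δ` be a complete fan.  A tuple of integral polynomials
`(p σ)`, one for each full-dimensional cone `σ`, arises as the tuple of restrictions
of a piecewise polynomial function on `Δ` if and only if, for every codimension-one
cone `τ = σ ∩ σ'` that is the common face of two full-dimensional cones `σ, σ'`,
the restrictions of `p σ` and `p σ'` to `τ` agree. -/
theorem tuple_glues_iff_codim_one_compatible {n : ℕ} (Δ : Fan n)
    (hcomplete : Δ.support = Set.univ)
    (p : Set (Fin n → ℝ) → MvPolynomial (Fin n) ℤ) :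
    (∃ f ∈ PPset Δ, ∀ σ ∈ Δ.cones, Submodule.span ℝ σ = ⊤ →
        ∀ x : ↥Δ.support, (x : Fin n → ℝ) ∈ σ → f x = pev (p σ) x) ↔
    (∀ σ ∈ Δ.cones, ∀ σ' ∈ Δ.cones, Submodule.span ℝ σ = ⊤ → Submodule.span ℝ σ' = ⊤ →
        Module.finrank ℝ ↥(Submodule.span ℝ (σ ∩ σ')) + 1 = n →
        ∀ x ∈ σ ∩ σ', pev (p σ) x = pev (p σ') x) := by
  constructor
  · rintro ⟨f, hf, hres⟩ σ hσ σ' hσ' hsp hsp' hrank x hxmem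
    have hxs : x ∈ Δ.support := by rw [hcomplete]; trivial
    have h1 := hres σ hσ hsp ⟨x, hxs⟩ hxmem.1
    have h2 := hres σ' hσ' hsp' ⟨x, hxs⟩ hxmem.2
    rw [← h1, ← h2]
  · intro H
    choose C hC1 hC2 hC3 using exists_fulldim_cone Δ hcomplete
    refine ⟨fun x => pev (p (C ↑x)) ↑x, ?_, ?_⟩
    · intro τ hτ
      obtain ⟨G, hG⟩ := Δ.rat τ hτ
      set z := ∑ g ∈ G, ιv g with hz_def
      have hzτ : z ∈ τ := by rw [hG]; exact gensum_mem_coneOf G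
      have hτsub : τ ⊆ C z := by
        have hface : IsFaceOf (τ ∩ C z) τ := Δ.inter_face τ hτ (C z) (hC1 z)
        rw [hG] at hface
        have heqf := face_eq_self_of_gensum hface ⟨gensum_mem_coneOf G, hC3 z⟩
        rw [← hG] at heqf
        intro y hy
        have h2 : y ∈ τ ∩ C z := by rw [heqf]; exact hy
        exact h2.2
      refine ⟨p (C z), ?_⟩
      intro x hxτ
      exact wellposed Δ hcomplete p H (hC1 ↑x) (hC1 z) (hC2 ↑x) (hC2 z)
        (hC3 ↑x) (hτsub hxτ)
    · intro σ hσ hsp x hxσ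
      exact wellposed Δ hcomplete p H (hC1 ↑x) hσ (hC2 ↑x) hsp (hC3 ↑x) hxσ
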